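/- For every n ≥ 1 and every x ≥ 0, the first moment of K_n^μ satisfies K_n^μ(ξ; x) = x + [ (e_μ(nx) − e_μ(−nx)) Q'(1) + e_μ(−nx) (Λ_μ Q)(1) ] / (Q(1) n e_μ(nx)), where K_n^μ(ξ;x) denotes K_n^μ applied to the identity function ξ ↦ ξ. -/

import Mathlib

open scoped BigOperators

/-- The Dunkl coefficients γ_μ(i). -/
noncomputable def gammaMu (μ : ℝ) (i : ℕ) : ℝ :=
  if Even i then
    2 ^ i * (Nat.factorial (i / 2)) *
      Real.Gamma (((i / 2 : ℕ) : ℝ) + μ + 1 / 2) / Real.Gamma (μ + 1 / 2)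
  else
    2 ^ i * (Nat.factorial (i / 2)) *
      Real.Gamma (((i / 2 : ℕ) : ℝ) + μ + 3 / 2) / Real.Gamma (μ + 1 / 2)

/-- θ_i = 0 if i is even, 1 if i is odd. -/
noncomputable def thetaFn (i : ℕ) : ℝ := if Even i then 0 else 1

/-- The Dunkl exponential e_μ(x) = Σ x^i / γ_μ(i). -/
noncomputable def dunklExp (μ : ℝ) (x : ℝ) : ℝ := ∑' i : ℕ, x ^ i / gammaMu μ i

/-- The Dunkl operator (Λ_μ f)(x) = f'(x) + μ (f(x) - f(-x)) / x. -/
noncomputable def dunklOp (μ : ℝ) (f : ℝ → ℝ) (x : ℝ) : ℝ :=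
  deriv f x + μ * (f x - f (-x)) / x

/-- Q(t) = Σ c_i t^i / γ_μ(i). -/
noncomputable def Qf (μ : ℝ) (c : ℕ → ℝ) (t : ℝ) : ℝ := ∑' i : ℕ, c i * t ^ i / gammaMu μ i

/-- The Dunkl–Appell polynomials q_i(x) = Σ_{j=0}^i (γ_μ(i)/(γ_μ(j)γ_μ(i-j))) c_{i-j} x^j. -/
noncomputable def qPoly (μ : ℝ) (c : ℕ → ℝ) (i : ℕ) (x : ℝ) : ℝ :=
  ∑ j ∈ Finset.range (i + 1),
    gammaMu μ i / (gammaMu μ j * gammaMu μ (i - j)) * c (i - j) * x ^ j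

/-- The operators K_n^μ(f;x). -/
noncomputable def Kop (μ : ℝ) (c : ℕ → ℝ) (n : ℕ) (f : ℝ → ℝ) (x : ℝ) : ℝ :=
  1 / (Qf μ c 1 * dunklExp μ (n * x)) *
    ∑' i : ℕ, qPoly μ c i (n * x) / gammaMu μ i * f (((i : ℝ) + 2 * μ * thetaFn i) / n)


noncomputable def wt (μ : ℝ) (i : ℕ) : ℝ := (i : ℝ) + 2 * μ * thetaFn i

lemma thetaFn_nonneg (i : ℕ) : 0 ≤ thetaFn i := by unfold thetaFn; split <;> norm_num

lemma thetaFn_le_one (i : ℕ) : thetaFn i ≤ 1 := by unfold thetaFn; split <;> norm_num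

lemma thetaFn_zero : thetaFn 0 = 0 := by simp [thetaFn]

lemma wt_nonneg (μ : ℝ) (hμ : 0 ≤ μ) (i : ℕ) : 0 ≤ wt μ i := by
  have := thetaFn_nonneg i
  unfold wt; positivity

lemma wt_zero (μ : ℝ) : wt μ 0 = 0 := by simp [wt, thetaFn_zero]

lemma wt_succ_pos (μ : ℝ) (hμ : 0 ≤ μ) (i : ℕ) : 0 < wt μ (i + 1) := by
  have h1 := thetaFn_nonneg (i + 1)
  have : ((i + 1 : ℕ) : ℝ) = (i : ℝ) + 1 := by push_cast; ring
  unfold wt; rw [this]; positivity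

lemma gammaMu_pos (μ : ℝ) (hμ : 0 ≤ μ) (i : ℕ) : 0 < gammaMu μ i := by
  have h0 : 0 < Real.Gamma (μ + 1 / 2) := Real.Gamma_pos_of_pos (by linarith)
  unfold gammaMu
  split
  · have h1 : 0 < Real.Gamma (((i / 2 : ℕ) : ℝ) + μ + 1 / 2) :=
      Real.Gamma_pos_of_pos (by positivity)
    have h2 : (0:ℝ) < Nat.factorial (i / 2) := by exact_mod_cast Nat.factorial_pos _
    positivity
  · have h1 : 0 < Real.Gamma (((i / 2 : ℕ) : ℝ) + μ + 3 / 2) :=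
      Real.Gamma_pos_of_pos (by positivity)
    have h2 : (0:ℝ) < Nat.factorial (i / 2) := by exact_mod_cast Nat.factorial_pos _
    positivity

lemma gammaMu_zero (μ : ℝ) (hμ : 0 ≤ μ) : gammaMu μ 0 = 1 := by
  have h : Real.Gamma (μ + 2⁻¹) ≠ 0 := by
    have : (0:ℝ) < μ + 2⁻¹ := by norm_num; linarith
    exact (Real.Gamma_pos_of_pos this).ne'
  simp [gammaMu, h]

lemma gammaMu_succ (μ : ℝ) (hμ : 0 ≤ μ) (i : ℕ) :
    gammaMu μ (i + 1) = wt μ (i + 1) * gammaMu μ i := by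
  have hΓ0 : Real.Gamma (μ + 1 / 2) ≠ 0 := (Real.Gamma_pos_of_pos (by linarith)).ne'
  rcases Nat.even_or_odd i with ⟨m, rfl⟩ | ⟨m, rfl⟩
  · have h1 : (m + m) / 2 = m := by omega
    have h2 : (m + m + 1) / 2 = m := by omega
    have he : Even (m + m) := ⟨m, rfl⟩
    have ho : ¬ Even (m + m + 1) := by simp [Nat.even_add_one, he]
    rw [gammaMu, gammaMu, if_neg ho, if_pos he, h1, h2, wt, thetaFn, if_neg ho]
    have harg : ((m : ℝ)) + μ + 3 / 2 = ((m : ℝ) + μ + 1 / 2) + 1 := by ring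
    rw [harg, Real.Gamma_add_one (by positivity)]
    push_cast
    field_simp
    ring
  · have h1 : (2 * m + 1) / 2 = m := by omega
    have h2 : (2 * m + 1 + 1) / 2 = m + 1 := by omega
    have ho : ¬ Even (2 * m + 1) := by simp [Nat.even_add_one, parity_simps]
    have he : Even (2 * m + 1 + 1) := by simp [Nat.even_add_one, ho]
    rw [gammaMu, gammaMu, if_pos he, if_neg ho, h1, h2, wt, thetaFn, if_pos he]
    have harg : (((m + 1 : ℕ)) : ℝ) + μ + 1 / 2 = ((m : ℝ) + μ + 3 / 2) := by push_cast; ring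
    rw [harg, Nat.factorial_succ]
    push_cast
    field_simp
    ring

lemma factorial_le_gammaMu (μ : ℝ) (hμ : 0 ≤ μ) (i : ℕ) :
    (Nat.factorial i : ℝ) ≤ gammaMu μ i := by
  induction i with
  | zero => simp [gammaMu_zero μ hμ]
  | succ k ih =>
    rw [gammaMu_succ μ hμ k, Nat.factorial_succ]
    push_cast
    have h1 : ((k : ℝ) + 1) ≤ wt μ (k + 1) := by
      have := thetaFn_nonneg (k + 1)
      unfold wt; push_cast; nlinarith
    have h2 : (0:ℝ) < Nat.factorial k := by exact_mod_cast Nat.factorial_pos k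
    have h3 := gammaMu_pos μ hμ k
    nlinarith

noncomputable def bb (μ y : ℝ) (j : ℕ) : ℝ := y ^ j / gammaMu μ j
noncomputable def dd (μ : ℝ) (c : ℕ → ℝ) (k : ℕ) : ℝ := c k / gammaMu μ k

lemma summable_abs_bb (μ : ℝ) (hμ : 0 ≤ μ) (y : ℝ) :
    Summable fun j : ℕ => |bb μ y j| := by
  apply Summable.of_nonneg_of_le (f := fun j => |y| ^ j / (Nat.factorial j : ℝ))
    (fun j => abs_nonneg _)
  · intro j
    have hg := gammaMu_pos μ hμ j
    have hf : (0:ℝ) < Nat.factorial j := by exact_mod_cast Nat.factorial_pos j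
    rw [bb, abs_div, abs_of_pos hg, abs_pow]
    exact div_le_div_of_nonneg_left (by positivity) hf (factorial_le_gammaMu μ hμ j)
  · exact Real.summable_pow_div_factorial |y|

lemma nat_le_two_pow (i : ℕ) : (i : ℝ) ≤ 2 ^ i := by
  have := @Nat.lt_two_pow_self i
  have : (i : ℝ) < (2:ℝ) ^ i := by exact_mod_cast this
  linarith

lemma one_le_two_pow (i : ℕ) : (1 : ℝ) ≤ 2 ^ i := by
  have : ((1:ℝ)) ≤ 2 := by norm_num
  calc (1:ℝ) = 1 ^ i := (one_pow i).symm
  _ ≤ 2 ^ i := pow_le_pow_left₀ (by norm_num) this i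

/-- key comparison: wt μ i ≤ (1+2μ) 2^i -/
lemma wt_le (μ : ℝ) (hμ : 0 ≤ μ) (i : ℕ) : wt μ i ≤ (1 + 2 * μ) * 2 ^ i := by
  have h1 := nat_le_two_pow i
  have h2 := thetaFn_le_one i
  have h3 := thetaFn_nonneg i
  have h4 := one_le_two_pow i
  unfold wt
  nlinarith

lemma summable_abs_wt_mul (μ : ℝ) (hμ : 0 ≤ μ) {f : ℕ → ℝ}
    (h : Summable fun i : ℕ => 2 ^ i * |f i|) :
    Summable fun i : ℕ => |wt μ i * f i| := by
  apply Summable.of_nonneg_of_le (f := fun i => (1 + 2 * μ) * (2 ^ i * |f i|))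
    (fun i => abs_nonneg _) _ (h.mul_left _)
  intro i
  rw [abs_mul, abs_of_nonneg (wt_nonneg μ hμ i)]
  show wt μ i * |f i| ≤ (1 + 2 * μ) * (2 ^ i * |f i|)
  rw [← mul_assoc]
  exact mul_le_mul_of_nonneg_right (wt_le μ hμ i) (abs_nonneg _)

lemma summable_abs_theta_mul {f : ℕ → ℝ} (h : Summable fun i : ℕ => |f i|) :
    Summable fun i : ℕ => |thetaFn i * f i| := by
  apply Summable.of_nonneg_of_le (fun i => abs_nonneg _) _ h
  intro i
  rw [abs_mul]
  have h1 := thetaFn_nonneg i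
  have h2 := thetaFn_le_one i
  have h3 := abs_nonneg (f i)
  rw [abs_of_nonneg h1]
  nlinarith

lemma summable_abs_nat_mul {f : ℕ → ℝ} (h : Summable fun i : ℕ => 2 ^ i * |f i|) :
    Summable fun i : ℕ => |(i : ℝ) * f i| := by
  apply Summable.of_nonneg_of_le (fun i => abs_nonneg _) _ h
  intro i
  rw [abs_mul, abs_of_nonneg (by positivity : (0:ℝ) ≤ (i:ℝ))]
  have := nat_le_two_pow i
  have h3 := abs_nonneg (f i)
  nlinarith

lemma abs_dd_eq (μ : ℝ) (hμ : 0 ≤ μ) (c : ℕ → ℝ) (r : ℝ) (hr : 0 ≤ r) (i : ℕ) :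
    |c i * r ^ i / gammaMu μ i| = r ^ i * |dd μ c i| := by
  have hg := gammaMu_pos μ hμ i
  rw [dd, abs_div, abs_div, abs_mul, abs_of_pos hg, abs_pow, abs_of_nonneg hr]
  ring

lemma summable_two_pow_dd (μ : ℝ) (hμ : 0 ≤ μ) (c : ℕ → ℝ)
    (hQ : ∀ t : ℝ, Summable fun i : ℕ => |c i * t ^ i / gammaMu μ i|) :
    Summable fun i : ℕ => 2 ^ i * |dd μ c i| := by
  have := hQ 2
  simpa [abs_dd_eq μ hμ c 2 (by norm_num)] using this

lemma summable_abs_dd (μ : ℝ) (hμ : 0 ≤ μ) (c : ℕ → ℝ)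
    (hQ : ∀ t : ℝ, Summable fun i : ℕ => |c i * t ^ i / gammaMu μ i|) :
    Summable fun i : ℕ => |dd μ c i| := by
  have := hQ 1
  simpa [dd] using this

lemma summable_two_pow_bb (μ : ℝ) (hμ : 0 ≤ μ) (y : ℝ) :
    Summable fun j : ℕ => 2 ^ j * |bb μ y j| := by
  have h := summable_abs_bb μ hμ (2 * y)
  apply h.congr
  intro j
  have hg := gammaMu_pos μ hμ j
  rw [bb, bb, abs_div, abs_div, abs_of_pos hg, mul_pow, abs_mul, abs_pow,
    abs_of_nonneg (by norm_num : (0:ℝ) ≤ 2)]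
  ring

lemma tsum_wt_bb (μ : ℝ) (hμ : 0 ≤ μ) (y : ℝ) :
    ∑' j : ℕ, wt μ j * bb μ y j = y * dunklExp μ y := by
  have hs : Summable fun j : ℕ => wt μ j * bb μ y j :=
    (summable_abs_wt_mul μ hμ (summable_two_pow_bb μ hμ y)).of_abs
  rw [hs.tsum_eq_zero_add, wt_zero, zero_mul, zero_add]
  have hpt : ∀ j : ℕ, wt μ (j + 1) * bb μ y (j + 1) = y * bb μ y j := by
    intro j
    have hW := (wt_succ_pos μ hμ j).ne'
    have hg := (gammaMu_pos μ hμ j).ne'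
    rw [bb, bb, gammaMu_succ μ hμ j, pow_succ]
    field_simp
  rw [tsum_congr hpt, tsum_mul_left]
  rfl

lemma theta_mul_eq_bb (μ : ℝ) (hμ : 0 ≤ μ) (y : ℝ) (j : ℕ) :
    y ^ j / gammaMu μ j - (-y) ^ j / gammaMu μ j = 2 * (thetaFn j * bb μ y j) := by
  rcases Nat.even_or_odd j with he | ho
  · rw [he.neg_pow, thetaFn, if_pos he]; ring
  · rw [ho.neg_pow, thetaFn, if_neg (Nat.not_even_iff_odd.mpr ho), bb]; ring

lemma tsum_theta_bb (μ : ℝ) (hμ : 0 ≤ μ) (y : ℝ) :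
    dunklExp μ y - dunklExp μ (-y) = 2 * ∑' j : ℕ, thetaFn j * bb μ y j := by
  have h1 : Summable fun j : ℕ => y ^ j / gammaMu μ j := (summable_abs_bb μ hμ y).of_abs
  have h2 : Summable fun j : ℕ => (-y) ^ j / gammaMu μ j := by
    have := (summable_abs_bb μ hμ (-y)).of_abs
    exact this
  rw [dunklExp, dunklExp, ← Summable.tsum_sub h1 h2, ← tsum_mul_left]
  exact tsum_congr (theta_mul_eq_bb μ hμ y)

lemma theta_mul_eq_dd (μ : ℝ) (hμ : 0 ≤ μ) (c : ℕ → ℝ) (k : ℕ) :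
    c k * 1 ^ k / gammaMu μ k - c k * (-1) ^ k / gammaMu μ k = 2 * (thetaFn k * dd μ c k) := by
  rcases Nat.even_or_odd k with he | ho
  · rw [he.neg_one_pow, thetaFn, if_pos he]; ring
  · rw [ho.neg_one_pow, thetaFn, if_neg (Nat.not_even_iff_odd.mpr ho), dd]; ring

lemma tsum_theta_dd (μ : ℝ) (hμ : 0 ≤ μ) (c : ℕ → ℝ)
    (hQ : ∀ t : ℝ, Summable fun i : ℕ => |c i * t ^ i / gammaMu μ i|) :
    Qf μ c 1 - Qf μ c (-1) = 2 * ∑' k : ℕ, thetaFn k * dd μ c k := by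
  rw [Qf, Qf, ← Summable.tsum_sub ((hQ 1).of_abs) ((hQ (-1)).of_abs), ← tsum_mul_left]
  exact tsum_congr (theta_mul_eq_dd μ hμ c)

lemma tsum_wt_dd (μ : ℝ) (hμ : 0 ≤ μ) (c : ℕ → ℝ)
    (hQ : ∀ t : ℝ, Summable fun i : ℕ => |c i * t ^ i / gammaMu μ i|) :
    ∑' k : ℕ, wt μ k * dd μ c k
      = (∑' k : ℕ, (k : ℝ) * dd μ c k) + 2 * μ * ∑' k : ℕ, thetaFn k * dd μ c k := by
  have h1 : Summable fun k : ℕ => (k : ℝ) * dd μ c k :=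
    (summable_abs_nat_mul (summable_two_pow_dd μ hμ c hQ)).of_abs
  have h2 : Summable fun k : ℕ => thetaFn k * dd μ c k :=
    (summable_abs_theta_mul (summable_abs_dd μ hμ c hQ)).of_abs
  rw [← tsum_mul_left, ← Summable.tsum_add h1 (h2.mul_left (2 * μ))]
  exact tsum_congr fun k => by rw [wt]; ring

lemma deriv_Qf_one (μ : ℝ) (hμ : 0 ≤ μ) (c : ℕ → ℝ)
    (hQ : ∀ t : ℝ, Summable fun i : ℕ => |c i * t ^ i / gammaMu μ i|) :
    deriv (Qf μ c) 1 = ∑' k : ℕ, (k : ℝ) * dd μ c k := by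
  have hu : Summable fun k : ℕ => (k : ℝ) * (|c k| * 2 ^ k / gammaMu μ k) := by
    apply Summable.of_nonneg_of_le (f := fun k : ℕ => |c k * 4 ^ k / gammaMu μ k|)
    · intro k
      have := gammaMu_pos μ hμ k
      positivity
    · intro k
      have hg := gammaMu_pos μ hμ k
      rw [abs_div, abs_mul, abs_of_pos hg, abs_pow, abs_of_nonneg (by norm_num : (0:ℝ) ≤ 4),
        ← mul_div_assoc, div_le_div_iff₀ hg hg]
      have hk : (k : ℝ) * 2 ^ k ≤ 4 ^ k := by
        have h1 := nat_le_two_pow k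
        have h2 : (4:ℝ) ^ k = 2 ^ k * 2 ^ k := by rw [← mul_pow]; norm_num
        nlinarith [pow_pos (by norm_num : (0:ℝ) < 2) k]
      nlinarith [mul_le_mul_of_nonneg_right hk (mul_nonneg (abs_nonneg (c k)) hg.le)]
    · exact hQ 4
  have hmem : (1:ℝ) ∈ Set.Ioo (-2:ℝ) 2 := by constructor <;> norm_num
  have hgg : ∀ (k : ℕ), ∀ t ∈ Set.Ioo (-2:ℝ) 2,
      HasDerivAt (fun t : ℝ => c k * t ^ k / gammaMu μ k)
        ((fun (k : ℕ) (t : ℝ) => c k * ((k : ℝ) * t ^ (k - 1)) / gammaMu μ k) k t) t :=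
    fun k t _ => ((hasDerivAt_pow k t).const_mul (c k)).div_const (gammaMu μ k)
  have hgg' : ∀ (k : ℕ), ∀ t ∈ Set.Ioo (-2:ℝ) 2,
      ‖c k * ((k : ℝ) * t ^ (k - 1)) / gammaMu μ k‖ ≤ (k : ℝ) * (|c k| * 2 ^ k / gammaMu μ k) := by
    intro k t ht
    obtain ⟨ht1, ht2⟩ := ht
    have hg := gammaMu_pos μ hμ k
    have habs : |t| ≤ 2 := abs_le.mpr ⟨by linarith, by linarith⟩
    rw [Real.norm_eq_abs, abs_div, abs_mul, abs_of_pos hg, abs_mul,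
      abs_of_nonneg (by positivity : (0:ℝ) ≤ (k:ℝ)), abs_pow, ← mul_div_assoc,
      div_le_div_iff₀ hg hg]
    have hpow : |t| ^ (k - 1) ≤ 2 ^ k := by
      calc |t| ^ (k - 1) ≤ 2 ^ (k - 1) := pow_le_pow_left₀ (abs_nonneg t) habs _
      _ ≤ 2 ^ k := pow_le_pow_right₀ (by norm_num) (Nat.sub_le k 1)
    have hh : |c k| * ((k:ℝ) * |t| ^ (k - 1)) ≤ (k:ℝ) * (|c k| * 2 ^ k) := by
      nlinarith [abs_nonneg (c k), pow_nonneg (abs_nonneg t) (k - 1),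
        mul_le_mul_of_nonneg_left hpow (abs_nonneg (c k)), Nat.cast_nonneg (α := ℝ) k]
    nlinarith [mul_le_mul_of_nonneg_right hh hg.le]
  have hg0 : Summable fun k : ℕ => c k * (1:ℝ) ^ k / gammaMu μ k := (hQ 1).of_abs
  have hder := hasDerivAt_tsum_of_isPreconnected
    (g := fun (k : ℕ) (t : ℝ) => c k * t ^ k / gammaMu μ k)
    (g' := fun (k : ℕ) (t : ℝ) => c k * ((k : ℝ) * t ^ (k - 1)) / gammaMu μ k)
    hu isOpen_Ioo isPreconnected_Ioo hgg hgg' hmem hg0 hmem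
  have : deriv (Qf μ c) 1 = ∑' k : ℕ, c k * ((k : ℝ) * (1:ℝ) ^ (k - 1)) / gammaMu μ k := by
    have heq : Qf μ c = fun t : ℝ => ∑' k : ℕ, c k * t ^ k / gammaMu μ k := rfl
    rw [heq]
    exact hder.deriv
  rw [this]
  exact tsum_congr fun k => by rw [one_pow, dd]; ring

lemma wt_add (μ : ℝ) (j k : ℕ) :
    wt μ (j + k) = wt μ j + wt μ k - 4 * μ * (thetaFn j * thetaFn k) := by
  unfold wt thetaFn
  rcases Nat.even_or_odd j with hj | hj <;> rcases Nat.even_or_odd k with hk | hk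
  · rw [if_pos hj, if_pos hk, if_pos (hj.add hk)]; push_cast; ring
  · rw [if_pos hj, if_neg (Nat.not_even_iff_odd.mpr hk),
      if_neg (Nat.not_even_iff_odd.mpr (hj.add_odd hk))]; push_cast; ring
  · rw [if_neg (Nat.not_even_iff_odd.mpr hj), if_pos hk,
      if_neg (Nat.not_even_iff_odd.mpr (hj.add_even hk))]; push_cast; ring
  · rw [if_neg (Nat.not_even_iff_odd.mpr hj), if_neg (Nat.not_even_iff_odd.mpr hk),
      if_pos (hj.add_odd hk)]; push_cast; ring

lemma key_pointwise (μ : ℝ) (hμ : 0 ≤ μ) (c : ℕ → ℝ) (y : ℝ) (i : ℕ) :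
    qPoly μ c i y / gammaMu μ i * wt μ i =
      (∑ j ∈ Finset.range (i + 1), (wt μ j * bb μ y j) * dd μ c (i - j))
        + (∑ j ∈ Finset.range (i + 1), bb μ y j * (wt μ (i - j) * dd μ c (i - j)))
        - 4 * μ * ∑ j ∈ Finset.range (i + 1),
            (thetaFn j * bb μ y j) * (thetaFn (i - j) * dd μ c (i - j)) := by
  rw [Finset.mul_sum, ← Finset.sum_add_distrib, ← Finset.sum_sub_distrib,
    qPoly, Finset.sum_div, Finset.sum_mul]
  apply Finset.sum_congr rfl
  intro j hj
  have hj' : j ≤ i := Nat.lt_succ_iff.mp (Finset.mem_range.mp hj)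
  have hwt : wt μ i = wt μ j + wt μ (i - j) - 4 * μ * (thetaFn j * thetaFn (i - j)) := by
    conv_lhs => rw [← Nat.add_sub_cancel' hj']
    exact wt_add μ j (i - j)
  have hgi := (gammaMu_pos μ hμ i).ne'
  have hgj := (gammaMu_pos μ hμ j).ne'
  have hgij := (gammaMu_pos μ hμ (i - j)).ne'
  rw [hwt, bb, dd]
  field_simp

lemma main_tsum (μ : ℝ) (hμ : 0 ≤ μ) (c : ℕ → ℝ)
    (hQ : ∀ t : ℝ, Summable fun i : ℕ => |c i * t ^ i / gammaMu μ i|) (y : ℝ) :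
    ∑' i : ℕ, qPoly μ c i y / gammaMu μ i * wt μ i
      = y * dunklExp μ y * Qf μ c 1
        + dunklExp μ y * ((∑' k : ℕ, (k : ℝ) * dd μ c k)
            + 2 * μ * ∑' k : ℕ, thetaFn k * dd μ c k)
        - 4 * μ * ((∑' j : ℕ, thetaFn j * bb μ y j) * ∑' k : ℕ, thetaFn k * dd μ c k) := by
  have hF1 : Summable fun j : ℕ => ‖wt μ j * bb μ y j‖ := by
    simpa only [Real.norm_eq_abs] using summable_abs_wt_mul μ hμ (summable_two_pow_bb μ hμ y)
  have hF2 : Summable fun j : ℕ => ‖bb μ y j‖ := by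
    simpa only [Real.norm_eq_abs] using summable_abs_bb μ hμ y
  have hF3 : Summable fun j : ℕ => ‖thetaFn j * bb μ y j‖ := by
    simpa only [Real.norm_eq_abs] using summable_abs_theta_mul (summable_abs_bb μ hμ y)
  have hG1 : Summable fun k : ℕ => ‖dd μ c k‖ := by
    simpa only [Real.norm_eq_abs] using summable_abs_dd μ hμ c hQ
  have hG2 : Summable fun k : ℕ => ‖wt μ k * dd μ c k‖ := by
    simpa only [Real.norm_eq_abs] using summable_abs_wt_mul μ hμ (summable_two_pow_dd μ hμ c hQ)
  have hG3 : Summable fun k : ℕ => ‖thetaFn k * dd μ c k‖ := by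
    simpa only [Real.norm_eq_abs] using summable_abs_theta_mul (summable_abs_dd μ hμ c hQ)
  have s1 : Summable fun i : ℕ =>
      ∑ j ∈ Finset.range (i + 1), (wt μ j * bb μ y j) * dd μ c (i - j) :=
    (summable_norm_sum_mul_range_of_summable_norm hF1 hG1).of_norm
  have s2 : Summable fun i : ℕ =>
      ∑ j ∈ Finset.range (i + 1), bb μ y j * (wt μ (i - j) * dd μ c (i - j)) :=
    (summable_norm_sum_mul_range_of_summable_norm hF2 hG2).of_norm
  have s3 : Summable fun i : ℕ =>
      ∑ j ∈ Finset.range (i + 1), (thetaFn j * bb μ y j) * (thetaFn (i - j) * dd μ c (i - j)) :=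
    (summable_norm_sum_mul_range_of_summable_norm hF3 hG3).of_norm
  calc ∑' i : ℕ, qPoly μ c i y / gammaMu μ i * wt μ i
      = ∑' i : ℕ,
          ((∑ j ∈ Finset.range (i + 1), (wt μ j * bb μ y j) * dd μ c (i - j))
            + (∑ j ∈ Finset.range (i + 1), bb μ y j * (wt μ (i - j) * dd μ c (i - j)))
            - 4 * μ * ∑ j ∈ Finset.range (i + 1),
                (thetaFn j * bb μ y j) * (thetaFn (i - j) * dd μ c (i - j))) :=
        tsum_congr (key_pointwise μ hμ c y)
    _ = (∑' i : ℕ, ∑ j ∈ Finset.range (i + 1), (wt μ j * bb μ y j) * dd μ c (i - j))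
          + (∑' i : ℕ, ∑ j ∈ Finset.range (i + 1), bb μ y j * (wt μ (i - j) * dd μ c (i - j)))
          - 4 * μ * ∑' i : ℕ, ∑ j ∈ Finset.range (i + 1),
              (thetaFn j * bb μ y j) * (thetaFn (i - j) * dd μ c (i - j)) := by
        rw [Summable.tsum_sub (s1.add s2) (s3.mul_left (4 * μ)), Summable.tsum_add s1 s2, tsum_mul_left]
    _ = (∑' j : ℕ, wt μ j * bb μ y j) * (∑' k : ℕ, dd μ c k)
          + (∑' j : ℕ, bb μ y j) * (∑' k : ℕ, wt μ k * dd μ c k)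
          - 4 * μ * ((∑' j : ℕ, thetaFn j * bb μ y j) * ∑' k : ℕ, thetaFn k * dd μ c k) := by
        rw [tsum_mul_tsum_eq_tsum_sum_range_of_summable_norm hF1 hG1,
          tsum_mul_tsum_eq_tsum_sum_range_of_summable_norm hF2 hG2,
          tsum_mul_tsum_eq_tsum_sum_range_of_summable_norm hF3 hG3]
    _ = _ := by
        rw [tsum_wt_bb μ hμ y, tsum_wt_dd μ hμ c hQ]
        have h1 : ∑' k : ℕ, dd μ c k = Qf μ c 1 :=
          tsum_congr fun k => by rw [dd, one_pow, mul_one]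
        have h2 : ∑' j : ℕ, bb μ y j = dunklExp μ y := rfl
        rw [h1, h2]

/-- the first moment of K_n^μ. -/
theorem Kop_first_moment (μ : ℝ) (hμ : 0 ≤ μ) (c : ℕ → ℝ) (hc0 : c 0 ≠ 0)
    (hQ : ∀ t : ℝ, Summable fun i : ℕ => |c i * t ^ i / gammaMu μ i|)
    (hq : ∀ i : ℕ, ∀ x : ℝ, 0 ≤ x → 0 ≤ qPoly μ c i x)
    (hQ1 : 0 < Qf μ c 1)
    (n : ℕ) (hn : 1 ≤ n) (x : ℝ) (hx : 0 ≤ x) :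
    Kop μ c n (fun ξ => ξ) x =
      x + ((dunklExp μ (n * x) - dunklExp μ (-(n * x))) * deriv (Qf μ c) 1 +
            dunklExp μ (-(n * x)) * dunklOp μ (Qf μ c) 1) /
          (Qf μ c 1 * n * dunklExp μ (n * x)) := by
  have hn0 : ((n : ℝ)) ≠ 0 := Nat.cast_ne_zero.mpr (by omega)
  have hE : 0 < dunklExp μ ((n : ℝ) * x) := by
    rw [dunklExp]
    refine Summable.tsum_pos ((summable_abs_bb μ hμ ((n : ℝ) * x)).of_abs)
      (fun i => ?_) 0 ?_
    · have := gammaMu_pos μ hμ i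
      have hnx : (0:ℝ) ≤ (n : ℝ) * x := by positivity
      positivity
    · rw [pow_zero, gammaMu_zero μ hμ]; norm_num
  have hKsum : (∑' i : ℕ, qPoly μ c i ((n : ℝ) * x) / gammaMu μ i
        * (((i : ℝ) + 2 * μ * thetaFn i) / (n : ℝ)))
      = (∑' i : ℕ, qPoly μ c i ((n : ℝ) * x) / gammaMu μ i * wt μ i) * ((n : ℝ))⁻¹ := by
    rw [← tsum_mul_right]
    exact tsum_congr fun i => by simp only [wt]; ring
  have hQm : Qf μ c (-1) = Qf μ c 1 - 2 * ∑' k : ℕ, thetaFn k * dd μ c k := by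
    have := tsum_theta_dd μ hμ c hQ
    linarith
  have hEm : dunklExp μ (-((n : ℝ) * x))
      = dunklExp μ ((n : ℝ) * x) - 2 * ∑' j : ℕ, thetaFn j * bb μ ((n : ℝ) * x) j := by
    have := tsum_theta_bb μ hμ ((n : ℝ) * x)
    linarith
  have hD : deriv (Qf μ c) 1 = ∑' k : ℕ, (k : ℝ) * dd μ c k := deriv_Qf_one μ hμ c hQ
  rw [Kop]
  rw [hKsum, main_tsum μ hμ c hQ ((n : ℝ) * x), dunklOp, hD, hQm, hEm]
  have hQ1' := hQ1.ne'
  have hE' := hE.ne'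
  field_simp
  ring
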